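/- arXiv:2408.09244 — 3 statements merged into one kernel-verified Lean document; each statement's English description precedes it below -/
import Mathlib

section
/- Let ρ : ℝ → ℝ³ be differentiable at t with derivative ρ̇(t), and suppose ρ(t) ≠ 0. Define ẑ(s) = ρ(s)/‖ρ(s)‖ and ω_{z⊥}(t) = (ρ(t) × ρ̇(t))/‖ρ(t)‖². Then ẑ is differentiable at t and its derivative equals ω_{z⊥}(t) × ẑ(t). -/
open scoped RealInnerProductSpace

noncomputable def cross3 (a b : EuclideanSpace ℝ (Fin 3)) : EuclideanSpace ℝ (Fin 3) :=
  (EuclideanSpace.equiv (Fin 3) ℝ).symm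
    (crossProduct ((EuclideanSpace.equiv (Fin 3) ℝ) a) ((EuclideanSpace.equiv (Fin 3) ℝ) b))

set_option maxHeartbeats 1000000 in
/-- the unit boresight direction ẑ = ρ/‖ρ‖ is differentiable with
derivative ω_{z⊥} × ẑ, where ω_{z⊥} = (ρ × ρ̇)/‖ρ‖². -/
theorem stmt2 (ρ : ℝ → EuclideanSpace ℝ (Fin 3)) (ρ' : EuclideanSpace ℝ (Fin 3)) (t : ℝ)
    (hρ : HasDerivAt ρ ρ' t) (hρ0 : ρ t ≠ 0)
    (z : ℝ → EuclideanSpace ℝ (Fin 3))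
    (hz : ∀ s, z s = ‖ρ s‖⁻¹ • ρ s)
    (ωperp : EuclideanSpace ℝ (Fin 3))
    (hω : ωperp = (‖ρ t‖ ^ 2)⁻¹ • cross3 (ρ t) ρ') :
    HasDerivAt z (cross3 ωperp (z t)) t := by
  have hr : ‖ρ t‖ ≠ 0 := norm_ne_zero_iff.mpr hρ0
  -- derivative of ‖ρ s‖^2
  have h1 : HasDerivAt (fun s => ‖ρ s‖ ^ 2) (2 * ⟪ρ t, ρ'⟫) t := hρ.norm_sq
  have hsq : (fun s => ‖ρ s‖ ^ 2) t ≠ 0 := by positivity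
  have h2 : HasDerivAt (fun s => Real.sqrt (‖ρ s‖ ^ 2))
      (2 * ⟪ρ t, ρ'⟫ / (2 * Real.sqrt (‖ρ t‖ ^ 2))) t := h1.sqrt hsq
  have hsqrt : ∀ s, Real.sqrt (‖ρ s‖ ^ 2) = ‖ρ s‖ := fun s =>
    Real.sqrt_sq (norm_nonneg _)
  have h3 : HasDerivAt (fun s => ‖ρ s‖) (⟪ρ t, ρ'⟫ / ‖ρ t‖) t := by
    have := h2
    simp only [hsqrt] at this
    convert this using 1
    field_simp
  have h4 : HasDerivAt (fun s => ‖ρ s‖⁻¹) (-(⟪ρ t, ρ'⟫ / ‖ρ t‖) / ‖ρ t‖ ^ 2) t :=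
    h3.inv hr
  have h5 : HasDerivAt (fun s => ‖ρ s‖⁻¹ • ρ s)
      (‖ρ t‖⁻¹ • ρ' + (-(⟪ρ t, ρ'⟫ / ‖ρ t‖) / ‖ρ t‖ ^ 2) • ρ t) t := h4.smul hρ
  have hzfun : z = fun s => ‖ρ s‖⁻¹ • ρ s := funext hz
  rw [hzfun]
  convert h5 using 1
  -- now the algebraic identity
  rw [hω]
  simp only []
  have hip : ⟪ρ t, ρ'⟫ = ρ t 0 * ρ' 0 + ρ t 1 * ρ' 1 + ρ t 2 * ρ' 2 := by
    simp [PiLp.inner_apply, Fin.sum_univ_three, RCLike.inner_apply]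
    ring
  have hn2 : ‖ρ t‖ ^ 2 = ρ t 0 * ρ t 0 + ρ t 1 * ρ t 1 + ρ t 2 * ρ t 2 := by
    rw [← real_inner_self_eq_norm_sq]
    simp only [PiLp.inner_apply, Fin.sum_univ_three, RCLike.inner_apply, conj_trivial]
  ext i
  have hi : ‖ρ t‖ * ‖ρ t‖ = ρ t 0 * ρ t 0 + ρ t 1 * ρ t 1 + ρ t 2 * ρ t 2 := by
    rw [← hn2]; ring
  have hS : ρ t 0 * ρ t 0 + ρ t 1 * ρ t 1 + ρ t 2 * ρ t 2 ≠ 0 := by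
    rw [← hn2]; positivity
  fin_cases i <;>
    simp [cross3, crossProduct, hip, hn2, PiLp.smul_apply, PiLp.add_apply, smul_eq_mul] <;>
    field_simp <;>
    (ring_nf at hS ⊢; field_simp; ring)
end

section
/- Let ẑ, k, x̂ : ℝ → ℝ³ and ω : ℝ → ℝ³ be such that at a time t: ‖ẑ(t)‖ = 1, ẑ(t) × k(t) ≠ 0, x̂(s) = (ẑ(s) × k(s))/‖ẑ(s) × k(s)‖ for all s, k is differentiable at t with derivative k̇(t), x̂ is differentiable at t, and the derivative of x̂ at t equals ω(t) × x̂(t). Define ŷ(t) = ẑ(t) × x̂(t). Then the boresight component of the angular velocity satisfies ⟨ω(t), ẑ(t)⟩ = (⟨ω(t), ŷ(t)⟩·⟨k(t), ẑ(t)⟩ − ⟨k̇(t), x̂(t)⟩)/⟨k(t), ŷ(t)⟩. -/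
open scoped RealInnerProductSpace

lemma inner3 (a b : EuclideanSpace ℝ (Fin 3)) :
    ⟪a, b⟫ = a 0 * b 0 + a 1 * b 1 + a 2 * b 2 := by
  simp [PiLp.inner_apply, Fin.sum_univ_three, RCLike.inner_apply]; ring

lemma cross3_apply (a b : EuclideanSpace ℝ (Fin 3)) (i : Fin 3) :
    cross3 a b i = ![a 1 * b 2 - a 2 * b 1, a 2 * b 0 - a 0 * b 2, a 0 * b 1 - a 1 * b 0] i := by
  simp [cross3, cross_apply, EuclideanSpace.equiv]

lemma inner_cross3_self_right (a b : EuclideanSpace ℝ (Fin 3)) :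
    ⟪b, cross3 a b⟫ = 0 := by
  simp only [inner3, cross3_apply]; simp [Matrix.cons_val_zero, Matrix.cons_val_one]; ring

lemma inner_cross3_self_left (a b : EuclideanSpace ℝ (Fin 3)) :
    ⟪a, cross3 a b⟫ = 0 := by
  simp only [inner3, cross3_apply]; simp; ring

lemma cross3_smul_right (c : ℝ) (a b : EuclideanSpace ℝ (Fin 3)) :
    cross3 a (c • b) = c • cross3 a b := by
  ext i
  simp only [PiLp.smul_apply, cross3_apply, smul_eq_mul]
  fin_cases i <;> simp <;> ring

lemma inner_cross3_cross3 (z k : EuclideanSpace ℝ (Fin 3)) :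
    ⟪k, cross3 z (cross3 z k)⟫ = ⟪z, k⟫ ^ 2 - ⟪z, z⟫ * ⟪k, k⟫ := by
  simp only [inner3, cross3_apply]; simp; ring

lemma lagrange3 (z k : EuclideanSpace ℝ (Fin 3)) :
    ⟪cross3 z k, cross3 z k⟫ = ⟪z, z⟫ * ⟪k, k⟫ - ⟪z, k⟫ ^ 2 := by
  simp only [inner3, cross3_apply]; simp; ring

lemma key3 (z x k w : EuclideanSpace ℝ (Fin 3)) (hzz : ⟪z, z⟫ = 1) (hzx : ⟪z, x⟫ = 0) :
    ⟪k, cross3 w x⟫ = ⟪k, cross3 z x⟫ * ⟪w, z⟫ - ⟪k, z⟫ * ⟪w, cross3 z x⟫ := by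
  simp only [inner3, cross3_apply] at *
  simp at *
  linear_combination (-(k 0 * (w 1 * x 2 - w 2 * x 1) + k 1 * (w 2 * x 0 - w 0 * x 2)
      + k 2 * (w 0 * x 1 - w 1 * x 0))) * hzz +
    ((k 1 * w 2 - k 2 * w 1) * z 0 + (k 2 * w 0 - k 0 * w 2) * z 1
      + (k 0 * w 1 - k 1 * w 0) * z 2) * hzx

/-- the boresight component of the angular velocity satisfies
ω_z = (ω_y k_z − k̇_x)/k_y. -/
theorem stmt3 (z k x : ℝ → EuclideanSpace ℝ (Fin 3)) (ω : ℝ → EuclideanSpace ℝ (Fin 3))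
    (t : ℝ) (k' : EuclideanSpace ℝ (Fin 3))
    (hz : ‖z t‖ = 1) (hzk : cross3 (z t) (k t) ≠ 0)
    (hx : ∀ s, x s = ‖cross3 (z s) (k s)‖⁻¹ • cross3 (z s) (k s))
    (hk : HasDerivAt k k' t)
    (hxd : HasDerivAt x (cross3 (ω t) (x t)) t)
    (y : EuclideanSpace ℝ (Fin 3)) (hy : y = cross3 (z t) (x t)) :
    ⟪ω t, z t⟫ = (⟪ω t, y⟫ * ⟪k t, z t⟫ - ⟪k', x t⟫) / ⟪k t, y⟫ := by
  set c := cross3 (z t) (k t) with hc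
  set n : ℝ := ‖c‖ with hn
  have hnpos : 0 < n := norm_pos_iff.mpr hzk
  have hzz : ⟪z t, z t⟫ = 1 := by
    rw [real_inner_self_eq_norm_sq, hz]; norm_num
  have hzx : ⟪z t, x t⟫ = 0 := by
    rw [hx t, real_inner_smul_right, ← hc, inner_cross3_self_left, mul_zero]
  -- k s ⊥ x s for all s
  have hkx : ∀ s, ⟪k s, x s⟫ = (0 : ℝ) := by
    intro s
    rw [hx s, real_inner_smul_right, inner_cross3_self_right, mul_zero]
  -- derivative of the constant 0 function
  have hD : HasDerivAt (fun s => ⟪k s, x s⟫) (⟪k t, cross3 (ω t) (x t)⟫ + ⟪k', x t⟫) t :=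
    hk.inner ℝ hxd
  have hD0 : HasDerivAt (fun s => ⟪k s, x s⟫) (0 : ℝ) t := by
    have : (fun s => ⟪k s, x s⟫) = fun _ => (0 : ℝ) := funext hkx
    rw [this]; exact hasDerivAt_const t 0
  have hsum : ⟪k t, cross3 (ω t) (x t)⟫ + ⟪k', x t⟫ = 0 := hD0.unique hD ▸ rfl
  -- value of ⟪k t, y⟫
  have hky : ⟪k t, y⟫ = -n := by
    rw [hy, hx t, cross3_smul_right, real_inner_smul_right, ← hc, inner_cross3_cross3, hzz]
    have hcc : ⟪c, c⟫ = ⟪z t, z t⟫ * ⟪k t, k t⟫ - ⟪z t, k t⟫ ^ 2 := lagrange3 _ _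
    rw [hzz, one_mul] at hcc
    have hcn : ⟪c, c⟫ = n ^ 2 := real_inner_self_eq_norm_sq c
    have : ⟪z t, k t⟫ ^ 2 - 1 * ⟪k t, k t⟫ = -n ^ 2 := by rw [one_mul]; nlinarith [hcc, hcn]
    rw [this]
    field_simp
    ring
  have hkey : ⟪k t, cross3 (ω t) (x t)⟫ = ⟪k t, y⟫ * ⟪ω t, z t⟫ - ⟪k t, z t⟫ * ⟪ω t, y⟫ := by
    rw [hy]; exact key3 (z t) (x t) (k t) (ω t) hzz hzx
  have hyne : ⟪k t, y⟫ ≠ 0 := by rw [hky]; exact neg_ne_zero.mpr (ne_of_gt hnpos)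
  rw [hkey] at hsum
  rw [eq_div_iff hyne]
  linear_combination hsum
end

section
/- Let n m : ℕ, t₀ < t_f be reals, f : (Fin n → ℝ) → (Fin m → ℝ) → ℝ → (Fin n → ℝ), L : (Fin n → ℝ) → (Fin m → ℝ) → ℝ → ℝ, φ : (Fin n → ℝ) → ℝ, and V : (Fin n → ℝ) → ℝ → ℝ. Suppose: (i) for every x, u, t, the function (y, s) ↦ V(y, s) is differentiable at (x, t) and ∂_t V(x,t) + L(x,u,t) + ⟨∇_x V(x,t), f(x,u,t)⟩ ≥ 0; (ii) V(x, t_f) = φ(x) for all x. Let x*, x : [t₀,t_f] → (Fin n → ℝ) and u*, u : [t₀,t_f] → (Fin m → ℝ) with L(x*(·),u*(·),·) and L(x(·),u(·),·) interval-integrable, x*'(t) = f(x*(t),u*(t),t) and x'(t) = f(x(t),u(t),t) for all t ∈ [t₀,t_f], x*(t₀) = x(t₀), and suppose equality holds in (i) along (x*(t), u*(t), t) for every t ∈ [t₀,t_f]. Then φ(x*(t_f)) + ∫_{t₀}^{t_f} L(x*(t),u*(t),t) dt ≤ φ(x(t_f)) + ∫_{t₀}^{t_f} L(x(t),u(t),t)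 dt. -/
open scoped RealInnerProductSpace

/-- Hamilton–Jacobi–Bellman verification theorem. If V satisfies the HJB
partial differential inequality ∂ₜV + L + ⟨∇ₓV, f⟩ ≥ 0 with terminal condition
V(·, t_f) = φ, then a trajectory along which this holds with equality has total cost
no greater than any other admissible trajectory with the same initial state. -/
theorem stmt16 (n m : ℕ) (t₀ t_f : ℝ) (ht : t₀ < t_f)
    (f : EuclideanSpace ℝ (Fin n) → (Fin m → ℝ) → ℝ → EuclideanSpace ℝ (Fin n))
    (L : EuclideanSpace ℝ (Fin n) → (Fin m → ℝ) → ℝ → ℝ)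
    (φ : EuclideanSpace ℝ (Fin n) → ℝ)
    (V : EuclideanSpace ℝ (Fin n) → ℝ → ℝ)
    -- (i) V is differentiable and satisfies the HJB inequality at every (x, u, t):
    (hdiff : ∀ (x : EuclideanSpace ℝ (Fin n)) (t : ℝ),
      DifferentiableAt ℝ (fun p : EuclideanSpace ℝ (Fin n) × ℝ => V p.1 p.2) (x, t))
    (hHJB : ∀ (x : EuclideanSpace ℝ (Fin n)) (u : Fin m → ℝ) (t : ℝ),
      0 ≤ deriv (fun s => V x s) t + L x u t
          + ⟪gradient (fun y => V y t) x, f x u t⟫)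
    -- (ii) terminal condition:
    (hterm : ∀ x, V x t_f = φ x)
    -- the two admissible state–control trajectories:
    (xs x : ℝ → EuclideanSpace ℝ (Fin n)) (us u : ℝ → (Fin m → ℝ))
    (hLint_s : IntervalIntegrable (fun t => L (xs t) (us t) t) MeasureTheory.volume t₀ t_f)
    (hLint : IntervalIntegrable (fun t => L (x t) (u t) t) MeasureTheory.volume t₀ t_f)
    (hxs : ∀ t ∈ Set.Icc t₀ t_f,
      HasDerivWithinAt xs (f (xs t) (us t) t) (Set.Icc t₀ t_f) t)
    (hx : ∀ t ∈ Set.Icc t₀ t_f,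
      HasDerivWithinAt x (f (x t) (u t) t) (Set.Icc t₀ t_f) t)
    (hinit : xs t₀ = x t₀)
    -- equality holds in the HJB relation along the optimal trajectory:
    (heq : ∀ t ∈ Set.Icc t₀ t_f,
      deriv (fun s => V (xs t) s) t + L (xs t) (us t) t
        + ⟪gradient (fun y => V y t) (xs t), f (xs t) (us t) t⟫ = 0) :
    φ (xs t_f) + ∫ t in t₀..t_f, L (xs t) (us t) t
      ≤ φ (x t_f) + ∫ t in t₀..t_f, L (x t) (u t) t := by
  have hFdiff : Differentiable ℝ (fun p : EuclideanSpace ℝ (Fin n) × ℝ => V p.1 p.2) :=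
    fun p => hdiff p.1 p.2
  -- key chain rule
  have key : ∀ (y : ℝ → EuclideanSpace ℝ (Fin n)) (w : ℝ → Fin m → ℝ),
      (∀ t ∈ Set.Icc t₀ t_f, HasDerivWithinAt y (f (y t) (w t) t) (Set.Icc t₀ t_f) t) →
      ∀ t ∈ Set.Ioo t₀ t_f,
        HasDerivAt (fun s => V (y s) s)
          (deriv (fun s => V (y t) s) t
            + ⟪gradient (fun z => V z t) (y t), f (y t) (w t) t⟫) t := by
    intro y w hy t htmem
    have hnhds : Set.Icc t₀ t_f ∈ nhds t := Icc_mem_nhds htmem.1 htmem.2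
    have hy' : HasDerivAt y (f (y t) (w t) t) t :=
      (hy t (Set.Ioo_subset_Icc_self htmem)).hasDerivAt hnhds
    have hcurve : HasDerivAt (fun s => ((y s : EuclideanSpace ℝ (Fin n)), s))
        (f (y t) (w t) t, 1) t := hy'.prodMk (hasDerivAt_id t)
    have hD := (hdiff (y t) t).hasFDerivAt
    have hcomp : HasDerivAt (fun s => V (y s) s)
        (fderiv ℝ (fun p : EuclideanSpace ℝ (Fin n) × ℝ => V p.1 p.2) (y t, t)
          (f (y t) (w t) t, 1)) t := by
      have h2 : HasDerivAt ((fun p : EuclideanSpace ℝ (Fin n) × ℝ => V p.1 p.2)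
          ∘ (fun s => ((y s : EuclideanSpace ℝ (Fin n)), s)))
          (fderiv ℝ (fun p : EuclideanSpace ℝ (Fin n) × ℝ => V p.1 p.2) (y t, t)
            (f (y t) (w t) t, 1)) t := hD.comp_hasDerivAt_of_eq t hcurve rfl
      exact h2
    -- time partial derivative
    have htime : HasDerivAt (fun s => V (y t) s)
        (fderiv ℝ (fun p : EuclideanSpace ℝ (Fin n) × ℝ => V p.1 p.2) (y t, t)
          ((0 : EuclideanSpace ℝ (Fin n)), (1 : ℝ))) t := by
      have h1 : HasDerivAt (fun s : ℝ => ((y t : EuclideanSpace ℝ (Fin n)), s))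
          ((0 : EuclideanSpace ℝ (Fin n)), (1 : ℝ)) t :=
        (hasDerivAt_const t (y t)).prodMk (hasDerivAt_id t)
      have h2 : HasDerivAt ((fun p : EuclideanSpace ℝ (Fin n) × ℝ => V p.1 p.2)
          ∘ (fun s : ℝ => ((y t : EuclideanSpace ℝ (Fin n)), s)))
          (fderiv ℝ (fun p : EuclideanSpace ℝ (Fin n) × ℝ => V p.1 p.2) (y t, t)
            ((0 : EuclideanSpace ℝ (Fin n)), (1 : ℝ))) t := hD.comp_hasDerivAt_of_eq t h1 rfl
      exact h2
    have htime' := htime.deriv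
    -- space partial derivative and gradient
    have hspace : HasFDerivAt (fun z : EuclideanSpace ℝ (Fin n) => V z t)
        ((fderiv ℝ (fun p : EuclideanSpace ℝ (Fin n) × ℝ => V p.1 p.2) (y t, t)).comp
          (ContinuousLinearMap.inl ℝ (EuclideanSpace ℝ (Fin n)) ℝ)) (y t) := by
      have h2 : HasFDerivAt ((fun p : EuclideanSpace ℝ (Fin n) × ℝ => V p.1 p.2)
          ∘ (fun z : EuclideanSpace ℝ (Fin n) => (z, t)))
          ((fderiv ℝ (fun p : EuclideanSpace ℝ (Fin n) × ℝ => V p.1 p.2) (y t, t)).comp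
            (ContinuousLinearMap.inl ℝ (EuclideanSpace ℝ (Fin n)) ℝ)) (y t) :=
        hD.comp (y t) (hasFDerivAt_prodMk_left (𝕜 := ℝ) (y t) t)
      exact h2
    have hgrad : ⟪gradient (fun z => V z t) (y t), f (y t) (w t) t⟫
        = fderiv ℝ (fun p : EuclideanSpace ℝ (Fin n) × ℝ => V p.1 p.2) (y t, t)
            (f (y t) (w t) t, 0) := by
      rw [gradient, hspace.fderiv, InnerProductSpace.toDual_symm_apply]
      rfl
    have hsum : fderiv ℝ (fun p : EuclideanSpace ℝ (Fin n) × ℝ => V p.1 p.2) (y t, t)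
          (f (y t) (w t) t, 1)
        = fderiv ℝ (fun p : EuclideanSpace ℝ (Fin n) × ℝ => V p.1 p.2) (y t, t)
            ((0 : EuclideanSpace ℝ (Fin n)), (1 : ℝ))
          + fderiv ℝ (fun p : EuclideanSpace ℝ (Fin n) × ℝ => V p.1 p.2) (y t, t)
            (f (y t) (w t) t, 0) := by
      rw [← map_add]
      norm_num
    rw [htime', hgrad, ← hsum]
    exact hcomp
  -- continuity of s ↦ V (y s) s on Icc
  have cont : ∀ (y : ℝ → EuclideanSpace ℝ (Fin n)) (w : ℝ → Fin m → ℝ),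
      (∀ t ∈ Set.Icc t₀ t_f, HasDerivWithinAt y (f (y t) (w t) t) (Set.Icc t₀ t_f) t) →
      ContinuousOn (fun s => V (y s) s) (Set.Icc t₀ t_f) := by
    intro y w hy
    have hyc : ContinuousOn y (Set.Icc t₀ t_f) := fun t htm =>
      (hy t htm).continuousWithinAt
    exact hFdiff.continuous.comp_continuousOn (hyc.prodMk continuousOn_id)
  have hLint' : MeasureTheory.IntegrableOn (fun t => L (x t) (u t) t)
      (Set.Icc t₀ t_f) MeasureTheory.volume :=
    (intervalIntegrable_iff_integrableOn_Icc_of_le ht.le).mp hLint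
  have hLint_s' : MeasureTheory.IntegrableOn (fun t => L (xs t) (us t) t)
      (Set.Icc t₀ t_f) MeasureTheory.volume :=
    (intervalIntegrable_iff_integrableOn_Icc_of_le ht.le).mp hLint_s
  -- For the arbitrary trajectory x: V(x t₀, t₀) ≤ φ(x t_f) + ∫ L
  have hxineq : V (x t₀) t₀ ≤ φ (x t_f) + ∫ t in t₀..t_f, L (x t) (u t) t := by
    have := intervalIntegral.integral_le_sub_of_hasDeriv_right_of_le ht.le
      (cont x u hx)
      (fun t htm => ((key x u hx t htm).hasDerivWithinAt))
      (hLint'.neg)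
      (φ := fun t => -(L (x t) (u t) t))
      (g' := fun t => deriv (fun s => V (x t) s) t
          + ⟪gradient (fun z => V z t) (x t), f (x t) (u t) t⟫)
      (fun t _ => by
        have := hHJB (x t) (u t) t
        linarith)
    rw [intervalIntegral.integral_neg] at this
    have hterm' := hterm (x t_f)
    linarith
  -- For the optimal trajectory xs: φ(xs t_f) + ∫ L ≤ V(xs t₀, t₀)
  have hxsineq : φ (xs t_f) + (∫ t in t₀..t_f, L (xs t) (us t) t) ≤ V (xs t₀) t₀ := by
    have := intervalIntegral.sub_le_integral_of_hasDeriv_right_of_le ht.le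
      (cont xs us hxs)
      (fun t htm => ((key xs us hxs t htm).hasDerivWithinAt))
      (hLint_s'.neg)
      (φ := fun t => -(L (xs t) (us t) t))
      (g' := fun t => deriv (fun s => V (xs t) s) t
          + ⟪gradient (fun z => V z t) (xs t), f (xs t) (us t) t⟫)
      (fun t htm => by
        have := heq t (Set.Ioo_subset_Icc_self htm)
        linarith)
    rw [intervalIntegral.integral_neg] at this
    have hterm' := hterm (xs t_f)
    linarith
  calc φ (xs t_f) + ∫ t in t₀..t_f, L (xs t) (us t) t
      ≤ V (xs t₀) t₀ := hxsineq
    _ = V (x t₀) t₀ := by rw [hinit]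
    _ ≤ φ (x t_f) + ∫ t in t₀..t_f, L (x t) (u t) t := hxineq
end
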